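/- arXiv:1312.5573 — 2 statements merged into one kernel-verified Lean document; each statement's English description precedes it below -/
import Mathlib

section
/- Let N ≥ 2, let 0 ≤ J₁ ≤ 4, and let u : {0,…,N} → S¹ ⊂ ℝ² satisfy the periodic boundary condition ⟨u¹, u⁰⟩ = ⟨u^N, u^{N-1}⟩. Then -J₁·∑_{i=0}^{N-2} ⟨uⁱ, uⁱ⁺¹⟩ + ∑_{i=0}^{N-2} ⟨uⁱ, uⁱ⁺²⟩ ≥ -(1 + J₁²/8)·(N-1), with equality if and only if uⁱ⁺² - (J₁/2)·uⁱ⁺¹ + uⁱ = 0 for all i = 0,…,N-2. -/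
open RealInnerProductSpace

theorem stmt_6 (N : ℕ) (hN : 2 ≤ N) (J₁ : ℝ) (hJ0 : 0 ≤ J₁) (hJ4 : J₁ ≤ 4)
    (u : ℕ → EuclideanSpace ℝ (Fin 2)) (hu : ∀ i ≤ N, ‖u i‖ = 1)
    (hper : ⟪u 1, u 0⟫ = ⟪u N, u (N - 1)⟫) :
    (-J₁ * ∑ i ∈ Finset.range (N - 1), ⟪u i, u (i + 1)⟫ +
        ∑ i ∈ Finset.range (N - 1), ⟪u i, u (i + 2)⟫ ≥
      -(1 + J₁ ^ 2 / 8) * ((N : ℝ) - 1)) ∧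
    (-J₁ * ∑ i ∈ Finset.range (N - 1), ⟪u i, u (i + 1)⟫ +
        ∑ i ∈ Finset.range (N - 1), ⟪u i, u (i + 2)⟫ =
      -(1 + J₁ ^ 2 / 8) * ((N : ℝ) - 1) ↔
      ∀ i ∈ Finset.range (N - 1), u (i + 2) - (J₁ / 2) • u (i + 1) + u i = 0) := by
  set n := N - 1 with hn
  have hnN : n + 1 = N := by omega
  have hcast : (n : ℝ) = (N : ℝ) - 1 := by
    have h := congrArg (Nat.cast : ℕ → ℝ) hnN; push_cast at h; linarith
  -- per-term expansion of the squared norm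
  have key : ∀ i ∈ Finset.range n,
      ‖u (i + 2) - (J₁ / 2) • u (i + 1) + u i‖ ^ 2
        = 2 + J₁ ^ 2 / 4 - J₁ * (⟪u (i + 1), u (i + 2)⟫ + ⟪u i, u (i + 1)⟫)
          + 2 * ⟪u i, u (i + 2)⟫ := by
    intro i hi
    have hi' := Finset.mem_range.mp hi
    have e0 : ‖u i‖ = 1 := hu i (by omega)
    have e1 : ‖u (i + 1)‖ = 1 := hu _ (by omega)
    have e2 : ‖u (i + 2)‖ = 1 := hu _ (by omega)
    have n0 : ⟪u i, u i⟫ = 1 := by rw [real_inner_self_eq_norm_sq, e0]; norm_num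
    have n1 : ⟪u (i + 1), u (i + 1)⟫ = 1 := by
      rw [real_inner_self_eq_norm_sq, e1]; norm_num
    have n2 : ⟪u (i + 2), u (i + 2)⟫ = 1 := by
      rw [real_inner_self_eq_norm_sq, e2]; norm_num
    rw [← real_inner_self_eq_norm_sq]
    simp only [inner_add_left, inner_add_right, inner_sub_left, inner_sub_right,
      real_inner_smul_left, real_inner_smul_right, n0, n1, n2]
    rw [real_inner_comm (u (i + 1)) (u i), real_inner_comm (u (i + 2)) (u i),
      real_inner_comm (u (i + 2)) (u (i + 1))]
    ring
  -- shifting the NN sum using periodicity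
  have shift : ∑ i ∈ Finset.range n, ⟪u (i + 1), u (i + 2)⟫
      = ∑ i ∈ Finset.range n, ⟪u i, u (i + 1)⟫ := by
    have h1 := Finset.sum_range_succ (fun i => ⟪u i, u (i + 1)⟫) n
    have h2 := Finset.sum_range_succ' (fun i => ⟪u i, u (i + 1)⟫) n
    have hf : ⟪u n, u (n + 1)⟫ = ⟪u 0, u 1⟫ := by
      rw [hnN, real_inner_comm, ← hper, real_inner_comm]
    rw [h1] at h2
    have : ∀ i, ⟪u (i + 1), u (i + 1 + 1)⟫ = ⟪u (i + 1), u (i + 2)⟫ := fun i => rfl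
    simp only [this] at h2
    linarith [h2, hf]
  set S := ∑ i ∈ Finset.range n, ‖u (i + 2) - (J₁ / 2) • u (i + 1) + u i‖ ^ 2 with hS
  have hSsum : S = (2 + J₁ ^ 2 / 4) * n
      - 2 * J₁ * ∑ i ∈ Finset.range n, ⟪u i, u (i + 1)⟫
      + 2 * ∑ i ∈ Finset.range n, ⟪u i, u (i + 2)⟫ := by
    rw [hS, Finset.sum_congr rfl key]
    rw [Finset.sum_add_distrib, Finset.sum_sub_distrib, Finset.sum_add_distrib,
      ← Finset.mul_sum, ← Finset.mul_sum, Finset.sum_add_distrib, shift]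
    simp only [Finset.sum_const, Finset.card_range, nsmul_eq_mul]
    push_cast
    ring
  have main : -J₁ * ∑ i ∈ Finset.range n, ⟪u i, u (i + 1)⟫
      + ∑ i ∈ Finset.range n, ⟪u i, u (i + 2)⟫
      = S / 2 - (1 + J₁ ^ 2 / 8) * ((N : ℝ) - 1) := by
    rw [hSsum, hcast]; ring
  have hterm : ∀ i ∈ Finset.range n,
      0 ≤ ‖u (i + 2) - (J₁ / 2) • u (i + 1) + u i‖ ^ 2 := fun i _ => sq_nonneg _
  have hS0 : 0 ≤ S := Finset.sum_nonneg hterm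
  constructor
  · rw [main]; linarith
  · rw [main]
    constructor
    · intro h
      have hSz : S = 0 := by linarith
      intro i hi
      have := (Finset.sum_eq_zero_iff_of_nonneg hterm).mp hSz i hi
      have := sq_eq_zero_iff.mp this
      exact norm_eq_zero.mp this
    · intro h
      have hSz : S = 0 := by
        apply Finset.sum_eq_zero
        intro i hi
        rw [h i hi]
        simp
      rw [hSz]; ring
end

section
/- Let 0 ≤ J₁ ≤ 4, N ≥ 2, and let u : {0,…,N} → S¹ with periodic boundary condition achieve the minimal energy -(1 + J₁²/8)·(N-1) of E(u) = -J₁·∑_{i=0}^{N-2}⟨uⁱ,uⁱ⁺¹⟩ + ∑_{i=0}^{N-2}⟨uⁱ,uⁱ⁺²⟩. If J₁ > 0, then for all i = 0,…,N-2 one has ⟨uⁱ, uⁱ⁺¹⟩ = J₁/4 and ⟨uⁱ, uⁱ⁺²⟩ = J₁²/8 - 1. -/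
open RealInnerProductSpace

private lemma inner_expand2 (a b : EuclideanSpace ℝ (Fin 2)) :
    ⟪a,b⟫ = a 0 * b 0 + a 1 * b 1 := by
  simp [PiLp.inner_apply, Fin.sum_univ_two, RCLike.inner_apply]; ring

private lemma norm_sq2 (v : EuclideanSpace ℝ (Fin 2)) (h : ‖v‖ = 1) :
    v 0 ^ 2 + v 1 ^ 2 = 1 := by
  have h2 : ⟪v,v⟫ = 1 := by rw [real_inner_self_eq_norm_sq, h]; ring
  rw [inner_expand2] at h2; linear_combination h2

private lemma cross_sq (a b : EuclideanSpace ℝ (Fin 2)) (ha : ‖a‖ = 1) (hb : ‖b‖ = 1) :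
    ⟪a,b⟫ ^ 2 + (a 1 * b 0 - a 0 * b 1) ^ 2 = 1 := by
  have hA := norm_sq2 a ha
  have hB := norm_sq2 b hb
  rw [inner_expand2]
  linear_combination (b 0 ^ 2 + b 1 ^ 2) * hA + hB

private lemma inner_decomp (a b c : EuclideanSpace ℝ (Fin 2)) (hb : ‖b‖ = 1) :
    ⟪a,c⟫ = ⟪a,b⟫ * ⟪b,c⟫ +
      (a 1 * b 0 - a 0 * b 1) * (b 0 * c 1 - b 1 * c 0) := by
  have hB := norm_sq2 b hb
  rw [inner_expand2, inner_expand2, inner_expand2]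
  linear_combination (-(a 0 * c 0 + a 1 * c 1)) * hB

private lemma key_id (j p q x y ac : ℝ) (h1 : p^2 + x^2 = 1) (h2 : q^2 + y^2 = 1)
    (hac : ac = p*q + x*y) :
    -j*(p+q)/2 + ac + (1 + j^2/8) = ((p + q - j/2)^2 + (x+y)^2)/2 := by
  linear_combination hac - h1/2 - h2/2

theorem stmt_7 (N : ℕ) (hN : 2 ≤ N) (J₁ : ℝ) (hJ0 : 0 ≤ J₁) (hJ4 : J₁ ≤ 4)
    (u : ℕ → EuclideanSpace ℝ (Fin 2)) (hu : ∀ i ≤ N, ‖u i‖ = 1)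
    (hper : ⟪u 1, u 0⟫ = ⟪u N, u (N - 1)⟫)
    (hmin : -J₁ * ∑ i ∈ Finset.range (N - 1), ⟪u i, u (i + 1)⟫ +
        ∑ i ∈ Finset.range (N - 1), ⟪u i, u (i + 2)⟫ =
      -(1 + J₁ ^ 2 / 8) * ((N : ℝ) - 1))
    (hJpos : 0 < J₁) :
    ∀ i ∈ Finset.range (N - 1),
      ⟪u i, u (i + 1)⟫ = J₁ / 4 ∧ ⟪u i, u (i + 2)⟫ = J₁ ^ 2 / 8 - 1 := by
  obtain ⟨X, hXdef⟩ : ∃ X : ℕ → ℝ,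
      ∀ i, X i = u i 1 * u (i+1) 0 - u i 0 * u (i+1) 1 := ⟨_, fun _ => rfl⟩
  obtain ⟨Y, hYdef⟩ : ∃ Y : ℕ → ℝ,
      ∀ i, Y i = u (i+1) 0 * u (i+2) 1 - u (i+1) 1 * u (i+2) 0 := ⟨_, fun _ => rfl⟩
  obtain ⟨G, hGdef⟩ : ∃ G : ℕ → ℝ, ∀ i, G i =
      ((⟪u i, u (i+1)⟫ + ⟪u (i+1), u (i+2)⟫ - J₁/2)^2 + (X i + Y i)^2)/2 :=
    ⟨_, fun _ => rfl⟩
  have hmem : ∀ i, i ∈ Finset.range (N-1) → i + 2 ≤ N := by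
    intro i hi; rw [Finset.mem_range] at hi; omega
  -- key facts per index
  have hpx : ∀ i ∈ Finset.range (N-1), ⟪u i, u (i+1)⟫^2 + X i ^2 = 1 := by
    intro i hi
    rw [hXdef]
    exact cross_sq _ _ (hu i (by have := hmem i hi; omega)) (hu (i+1) (by have := hmem i hi; omega))
  have hqy : ∀ i ∈ Finset.range (N-1), ⟪u (i+1), u (i+2)⟫^2 + Y i ^2 = 1 := by
    intro i hi
    have := cross_sq (u (i+1)) (u (i+2)) (hu (i+1) (by have := hmem i hi; omega))
      (hu (i+2) (hmem i hi))
    rw [hYdef]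
    linear_combination this
  have hac : ∀ i ∈ Finset.range (N-1),
      ⟪u i, u (i+2)⟫ = ⟪u i, u (i+1)⟫ * ⟪u (i+1), u (i+2)⟫ + X i * Y i := by
    intro i hi
    rw [hXdef, hYdef]
    exact inner_decomp _ _ _ (hu (i+1) (by have := hmem i hi; omega))
  have hkey : ∀ i ∈ Finset.range (N-1),
      -J₁ * (⟪u i, u (i+1)⟫ + ⟪u (i+1), u (i+2)⟫)/2 + ⟪u i, u (i+2)⟫ + (1 + J₁^2/8)
        = G i := by
    intro i hi
    rw [hGdef]
    exact key_id J₁ _ _ _ _ _ (hpx i hi) (hqy i hi) (hac i hi)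
  -- shift identity using periodicity
  have hNm : (N - 1) + 1 = N := by omega
  have hPer : ⟪u (N-1), u N⟫ = ⟪u 0, u 1⟫ := by
    rw [real_inner_comm, ← hper, real_inner_comm]
  have hshift : ∑ i ∈ Finset.range (N-1), ⟪u (i+1), u (i+1+1)⟫
      = ∑ i ∈ Finset.range (N-1), ⟪u i, u (i+1)⟫ := by
    have h2 := Finset.sum_range_succ' (fun i => ⟪u i, u (i+1)⟫) (N-1)
    have h3 := Finset.sum_range_succ (fun i => ⟪u i, u (i+1)⟫) (N-1)
    rw [hNm] at h2 h3
    simp only [Nat.zero_add] at h2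
    have := h2.symm.trans h3
    linarith [this, hPer]
  have hcard : ((N - 1 : ℕ) : ℝ) = (N : ℝ) - 1 := by
    have h1 : 1 ≤ N := by omega
    push_cast [h1]; ring
  have hsum0 : ∑ i ∈ Finset.range (N-1), G i = 0 := by
    calc ∑ i ∈ Finset.range (N-1), G i
        = ∑ i ∈ Finset.range (N-1),
          (-J₁ * (⟪u i, u (i+1)⟫ + ⟪u (i+1), u (i+1+1)⟫)/2 + ⟪u i, u (i+2)⟫
            + (1 + J₁^2/8)) := by
          refine (Finset.sum_congr rfl fun i hi => ?_).symm
          have := hkey i hi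
          have hrw : i + 1 + 1 = i + 2 := rfl
          rw [hrw]
          exact this
      _ = 0 := by
          rw [Finset.sum_add_distrib, Finset.sum_add_distrib, Finset.sum_const,
            Finset.card_range, nsmul_eq_mul, hcard]
          have hsplit : ∑ i ∈ Finset.range (N-1),
              -J₁ * (⟪u i, u (i+1)⟫ + ⟪u (i+1), u (i+1+1)⟫)/2
              = -J₁ * ∑ i ∈ Finset.range (N-1), ⟪u i, u (i+1)⟫ := by
            have e1 : ∑ i ∈ Finset.range (N-1),
                -J₁ * (⟪u i, u (i+1)⟫ + ⟪u (i+1), u (i+1+1)⟫)/2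
                = (-J₁/2) * ∑ i ∈ Finset.range (N-1), ⟪u i, u (i+1)⟫
                  + (-J₁/2) * ∑ i ∈ Finset.range (N-1), ⟪u (i+1), u (i+1+1)⟫ := by
              rw [Finset.mul_sum, Finset.mul_sum, ← Finset.sum_add_distrib]
              exact Finset.sum_congr rfl fun i _ => by ring
            rw [e1, hshift]; ring
          rw [hsplit]
          linarith [hmin]
  have hGz : ∀ i ∈ Finset.range (N-1), G i = 0 := by
    rw [← Finset.sum_eq_zero_iff_of_nonneg]
    · exact hsum0
    · intro i _
      rw [hGdef]
      positivity
  intro i hi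
  have hGi := hGz i hi
  rw [hGdef] at hGi
  have h1 : ⟪u i, u (i+1)⟫ + ⟪u (i+1), u (i+2)⟫ = J₁/2 := by
    nlinarith [sq_nonneg (⟪u i, u (i+1)⟫ + ⟪u (i+1), u (i+2)⟫ - J₁/2), sq_nonneg (X i + Y i), hGi]
  have h2 : X i + Y i = 0 := by
    nlinarith [sq_nonneg (⟪u i, u (i+1)⟫ + ⟪u (i+1), u (i+2)⟫ - J₁/2), sq_nonneg (X i + Y i), hGi]
  have hsq : ⟪u i, u (i+1)⟫^2 = ⟪u (i+1), u (i+2)⟫^2 := by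
    have hxy : X i ^ 2 = Y i ^ 2 := by
      have : X i = -Y i := by linarith
      rw [this]; ring
    linarith [hpx i hi, hqy i hi, hxy]
  have hpq : ⟪u i, u (i+1)⟫ = ⟪u (i+1), u (i+2)⟫ := by
    have hz : (⟪u i, u (i+1)⟫ - ⟪u (i+1), u (i+2)⟫) * (J₁/2) = 0 := by
      linear_combination hsq - (⟪u i, u (i+1)⟫ - ⟪u (i+1), u (i+2)⟫) * h1
    rcases mul_eq_zero.mp hz with h | h
    · linarith
    · linarith
  have hPi : ⟪u i, u (i+1)⟫ = J₁ / 4 := by linarith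
  refine ⟨hPi, ?_⟩
  have hXsq : X i ^ 2 = 1 - (J₁/4)^2 := by
    linear_combination hpx i hi - (⟪u i, u (i+1)⟫ + J₁/4) * hPi
  have hY' : Y i = - X i := by linarith
  rw [hac i hi, ← hpq, hPi, hY']
  linear_combination -hXsq
end
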